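/- If v_π satisfies v_π(s) = Σ_a π(a|s;θ) q_π(s,a) with q_π(s,a) = Σ_{s'} P(s'|s,a)[r(s,a,s') + γ(s,a,s') v_π(s')], then the matrix of gradients V̇ (rows indexed by states) satisfies V̇ = G + P_{π,γ} V̇, where row s of G is Σ_a (∂π(a|s;θ)/∂θ) q_π(s,a). Consequently, if (I - P_{π,γ}) is invertible, V̇ = (I - P_{π,γ})^{-1} G. -/

import Mathlib

lemma aux_matrix_solve {S : Type*} [Fintype S] [DecidableEq S]
    {E : Type*} [AddCommGroup E] [Module ℝ E]
    (M : Matrix S S ℝ) (x g : S → E) (hinv : IsUnit (1 - M).det)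
    (h : ∀ s, x s = g s + ∑ s', M s s' • x s') :
    ∀ s, x s = ∑ s', (1 - M)⁻¹ s s' • g s' := by
  have key : ∀ s, ∑ s', (1 - M) s s' • x s' = g s := by
    intro s
    have : ∑ s', ((if s = s' then (1:ℝ) else 0) - M s s') • x s'
        = x s - ∑ s', M s s' • x s' := by
      rw [Finset.sum_congr rfl (fun s' _ => sub_smul _ _ _),
        Finset.sum_sub_distrib]
      congr 1
      simp [ite_smul]
    simp only [Matrix.sub_apply, Matrix.one_apply]
    rw [this, h s]; abel
  intro s
  calc x s = ∑ s'', (((1 - M)⁻¹ * (1 - M)) s s'') • x s'' := by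
        rw [Matrix.nonsing_inv_mul _ hinv]
        simp [Matrix.one_apply, ite_smul]
    _ = ∑ s'', ∑ s', ((1 - M)⁻¹ s s' * (1 - M) s' s'') • x s'' := by
        simp only [Matrix.mul_apply, Finset.sum_smul]
    _ = ∑ s', ∑ s'', ((1 - M)⁻¹ s s' * (1 - M) s' s'') • x s'' :=
        Finset.sum_comm
    _ = ∑ s', (1 - M)⁻¹ s s' • ∑ s'', (1 - M) s' s'' • x s'' := by
        simp [Finset.smul_sum, mul_smul]
    _ = ∑ s', (1 - M)⁻¹ s s' • g s' := by
        exact Finset.sum_congr rfl (fun s' _ => by rw [key s'])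

/-- **Bellman recursion for the matrix of value gradients.**
If `v θ s = ∑_a π θ s a * q θ s a` with
`q θ s a = ∑_{s'} P(s'|s,a) (r(s,a,s') + γ(s,a,s') v θ s')`, and `π`, `v` are
differentiable in `θ`, then the gradients satisfy the recursion
`V̇(s) = G(s) + ∑_{s'} P_{π,γ}(s,s') V̇(s')` where `G(s) = ∑_a q(s,a) ∂π(a|s;θ)/∂θ`,
and if `I - P_{π,γ}` is invertible then `V̇ = (I - P_{π,γ})⁻¹ G`. -/
theorem value_gradient_matrix_recursion
    {S A : Type*} [Fintype S] [Fintype A] [DecidableEq S] {n : ℕ}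
    (π : (Fin n → ℝ) → S → A → ℝ) (v : (Fin n → ℝ) → S → ℝ)
    (q : (Fin n → ℝ) → S → A → ℝ)
    (Pk : S → A → S → ℝ) (r γ : S → A → S → ℝ) (θ0 : Fin n → ℝ)
    (hπ : ∀ s a, DifferentiableAt ℝ (fun θ => π θ s a) θ0)
    (hv : ∀ s, DifferentiableAt ℝ (fun θ => v θ s) θ0)
    (hq : ∀ θ s a, q θ s a = ∑ s' : S, Pk s a s' * (r s a s' + γ s a s' * v θ s'))
    (hval : ∀ θ s, v θ s = ∑ a : A, π θ s a * q θ s a)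
    (hinv : IsUnit (1 - Matrix.of (fun s s' : S =>
        ∑ a : A, π θ0 s a * Pk s a s' * γ s a s')).det) :
    (∀ s : S, fderiv ℝ (fun θ => v θ s) θ0 =
        (∑ a : A, q θ0 s a • fderiv ℝ (fun θ => π θ s a) θ0)
        + ∑ s' : S, (∑ a : A, π θ0 s a * Pk s a s' * γ s a s') •
            fderiv ℝ (fun θ => v θ s') θ0) ∧
    (∀ s : S, fderiv ℝ (fun θ => v θ s) θ0 =
        ∑ s' : S, ((1 - Matrix.of (fun s s' : S =>
            ∑ a : A, π θ0 s a * Pk s a s' * γ s a s'))⁻¹ s s') •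
          (∑ a : A, q θ0 s' a • fderiv ℝ (fun θ => π θ s' a) θ0)) := by
  have hqd : ∀ s a, HasFDerivAt (fun θ => q θ s a)
      (∑ s' : S, (Pk s a s' * γ s a s') • fderiv ℝ (fun θ => v θ s') θ0) θ0 := by
    intro s a
    have : (fun θ => q θ s a)
        = fun θ => ∑ s' : S, Pk s a s' * (r s a s' + γ s a s' * v θ s') := by
      funext θ; exact hq θ s a
    rw [this]
    apply HasFDerivAt.fun_sum
    intro s' _
    have h1 : HasFDerivAt (fun θ => γ s a s' * v θ s')
        (γ s a s' • fderiv ℝ (fun θ => v θ s') θ0) θ0 :=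
      ((hv s').hasFDerivAt).const_mul _
    have h2 := (h1.const_add (r s a s')).const_mul (Pk s a s')
    rwa [smul_smul] at h2
  have hD : ∀ s, fderiv ℝ (fun θ => v θ s) θ0 =
      (∑ a : A, q θ0 s a • fderiv ℝ (fun θ => π θ s a) θ0)
      + ∑ s' : S, (∑ a : A, π θ0 s a * Pk s a s' * γ s a s') •
          fderiv ℝ (fun θ => v θ s') θ0 := by
    intro s
    have hvs : (fun θ => v θ s) = fun θ => ∑ a : A, π θ s a * q θ s a := by
      funext θ; exact hval θ s
    have hterm : ∀ a : A, HasFDerivAt (fun θ => π θ s a * q θ s a)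
        (π θ0 s a • (∑ s' : S, (Pk s a s' * γ s a s') •
            fderiv ℝ (fun θ => v θ s') θ0)
          + q θ0 s a • fderiv ℝ (fun θ => π θ s a) θ0) θ0 := by
      intro a
      exact ((hπ s a).hasFDerivAt).mul (hqd s a)
    have hsum : HasFDerivAt (fun θ => v θ s)
        (∑ a : A, (π θ0 s a • (∑ s' : S, (Pk s a s' * γ s a s') •
            fderiv ℝ (fun θ => v θ s') θ0)
          + q θ0 s a • fderiv ℝ (fun θ => π θ s a) θ0)) θ0 := by
      rw [hvs]; exact HasFDerivAt.fun_sum (fun a _ => hterm a)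
    rw [hsum.fderiv, Finset.sum_add_distrib, add_comm]
    congr 1
    calc ∑ a : A, π θ0 s a • ∑ s' : S, (Pk s a s' * γ s a s') •
            fderiv ℝ (fun θ => v θ s') θ0
        = ∑ a : A, ∑ s' : S, (π θ0 s a * Pk s a s' * γ s a s') •
            fderiv ℝ (fun θ => v θ s') θ0 := by
          simp [Finset.smul_sum, smul_smul, mul_assoc]
      _ = ∑ s' : S, ∑ a : A, (π θ0 s a * Pk s a s' * γ s a s') •
            fderiv ℝ (fun θ => v θ s') θ0 := Finset.sum_comm
      _ = ∑ s' : S, (∑ a : A, π θ0 s a * Pk s a s' * γ s a s') •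
            fderiv ℝ (fun θ => v θ s') θ0 := by
          simp [Finset.sum_smul]
  refine ⟨hD, ?_⟩
  have := aux_matrix_solve
    (Matrix.of (fun s s' : S => ∑ a : A, π θ0 s a * Pk s a s' * γ s a s'))
    (fun s => fderiv ℝ (fun θ => v θ s) θ0)
    (fun s => ∑ a : A, q θ0 s a • fderiv ℝ (fun θ => π θ s a) θ0)
    hinv (fun s => hD s)
  exact this
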